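/- Let P be an operad in K-modules whose underlying Σ_*-module is the commutative operad, i.e. P(r) = K (trivial Σ_r-representation) for r ≥ 1 and P(0) = 0. Then for each r, the degree-d part of the simplicial bar construction N_d(C)(r), spanned by isomorphism classes of r-trees with d levels in which every level contains at least one non-unit vertex, is isomorphic as a Σ_r-module to the degree-d part of the normalized chain complex of the simplicial set K̄(r) of chains of partitions of {1,...,r}, and these isomorphisms commute with the differentials. -/

import Mathlib

attribute [local instance] Classical.propDecidable

noncomputable section

/-- A tree with `e + 1` levels and `r` entries, as appears in the simplicial bar
construction `N_d(C)(r)` of the commutative operad `C` in degree `d = e + 1` (since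
`C(m) = K` is one dimensional, labels can be omitted and the bar construction is spanned
by such trees): `V i` is the set of vertices of level `i + 1`, each vertex of level
`i + 2` has a parent of level `i + 1`, the entries `{1, …, r}` are attached to the
top-level vertices; every vertex has at least one child (the commutative operad has
`C(0) = 0`), and there is exactly one bottom vertex (the trivial coefficient `I`). -/
structure BarTree (r e : ℕ) where
  V : ℕ → Type
  top_empty : ∀ i : ℕ, e < i → IsEmpty (V i)
  par : ∀ i : ℕ, V (i + 1) → V i
  ent : Fin r → V e
  root_subsingleton : Subsingleton (V 0)
  par_surj : ∀ i : ℕ, i < e → Function.Surjective (par i)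
  ent_surj : Function.Surjective ent

/-- Isomorphism of bar trees. -/
def BarTreeIso {r e : ℕ} (T T' : BarTree r e) : Prop :=
  ∃ f : ∀ i, T.V i ≃ T'.V i,
    (∀ (i : ℕ) (v : T.V (i + 1)), T'.par i (f (i + 1) v) = f i (T.par i v)) ∧
    (∀ x : Fin r, T'.ent x = f e (T.ent x))

/-- Iterated parent map, descending `k` levels. -/
def descend {r e : ℕ} (T : BarTree r e) : ∀ (k j : ℕ), T.V (j + k) → T.V j
  | 0, _ => id
  | (k + 1), j => fun x => descend T k j (T.par (j + k) x)

/-- The chain of partitions `λ_0 ≤ λ_1 ≤ ⋯ ≤ λ_{e+1}` of `{1, …, r}` associated to a tree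
with `e + 1` levels: the blocks of `λ_i` (for `i ≤ e`) are indexed by the vertices of
level `i + 1` — two entries lie in the same block of `λ_i` iff their attaching vertices
have the same ancestor at level `i + 1` — and `λ_{e+1}` is the partition into singletons.
(Setoids on `Fin r` carry the order *reverse* to refinement: `⊤` is the one-block
partition, `⊥` the discrete one, and chains of refinements are antitone.) -/
def toChain {r e : ℕ} (T : BarTree r e) : Fin (e + 2) → Setoid (Fin r) := fun i =>
  if h : (i : ℕ) ≤ e then
    Setoid.ker fun x : Fin r =>
      descend T (e - (i : ℕ)) (i : ℕ)
        (cast (congrArg T.V (by omega : e = (i : ℕ) + (e - (i : ℕ)))) (T.ent x))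
  else ⊥

/-- The action of `Σ_r` on bar trees: relabeling of the entries. -/
def actTree {r e : ℕ} (w : Equiv.Perm (Fin r)) (T : BarTree r e) : BarTree r e :=
  { T with
    ent := fun x => T.ent (w⁻¹ x)
    ent_surj := fun v => by
      obtain ⟨x, hx⟩ := T.ent_surj v
      exact ⟨w x, by simpa using hx⟩ }

/-- The relabeling action of `Σ_r` on partitions of `{1, …, r}`. -/
def permPart {r : ℕ} (w : Equiv.Perm (Fin r)) (q : Setoid (Fin r)) : Setoid (Fin r) :=
  Setoid.comap (⇑w⁻¹) q

/-- "Every level contains at least one non-unit vertex": in each level some vertex has a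
number of children different from one.  Under the correspondence with chains of
partitions this is exactly nondegeneracy (consecutive partitions are distinct). -/
def NonUnitLevels {r e : ℕ} (T : BarTree r e) : Prop :=
  (∀ i : ℕ, i < e → ∃ v : T.V i, ¬ (∃! w : T.V (i + 1), T.par i w = v)) ∧
  (∃ v : T.V e, ¬ (∃! x : Fin r, T.ent x = v))

def kerEquiv {α β γ : Type*} (g : α → β) (g' : α → γ) (hg : Function.Surjective g)
    (hg' : Function.Surjective g') (hk : Setoid.ker g = Setoid.ker g') : β ≃ γ :=
  ((Setoid.quotientKerEquivOfSurjective g hg).symm.trans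
    (Equiv.cast (congrArg Quotient hk))).trans (Setoid.quotientKerEquivOfSurjective g' hg')

theorem cast_quot_mk {α : Type*} {s s' : Setoid α} (h : s = s') (x : α) :
    Equiv.cast (congrArg Quotient h) (Quotient.mk s x) = Quotient.mk s' x := by
  subst h; rfl

theorem kerEquiv_apply {α β γ : Type*} (g : α → β) (g' : α → γ) (hg : Function.Surjective g)
    (hg' : Function.Surjective g') (hk : Setoid.ker g = Setoid.ker g') (x : α) :
    kerEquiv g g' hg hg' hk (g x) = g' x := by
  have h1 : Setoid.quotientKerEquivOfSurjective g hg (Quotient.mk _ x) = g x := rfl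
  have h2 : (Setoid.quotientKerEquivOfSurjective g hg).symm (g x) = Quotient.mk _ x := by
    rw [← h1, Equiv.symm_apply_apply]
  simp only [kerEquiv, Equiv.trans_apply, h2, cast_quot_mk hk]
  rfl


namespace BarTree
variable {r e : ℕ}

theorem par_heq (T : BarTree r e) {i i' : ℕ} (h : i = i') {x : T.V (i+1)} {x' : T.V (i'+1)}
    (hx : HEq x x') : HEq (T.par i x) (T.par i' x') := by subst h; rw [eq_of_heq hx]

theorem descend_heq (T : BarTree r e) {k k' j : ℕ} (hk : k = k') {x : T.V (j+k)} {x' : T.V (j+k')}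
    (hx : HEq x x') : descend T k j x = descend T k' j x' := by subst hk; rw [eq_of_heq hx]

theorem descend_step (T : BarTree r e) (k j : ℕ) (x : T.V (j+1+k)) :
    descend T (k+1) j (cast (congrArg T.V (by omega : j+1+k = j+(k+1))) x)
      = T.par j (descend T k (j+1) x) := by
  induction k with
  | zero =>
    show T.par j (cast (congrArg T.V (by omega : j+1+0 = j+(0+1))) x) = T.par j x
    exact congrArg (T.par j) (eq_of_heq (cast_heq _ _))
  | succ k IH =>
    show descend T (k+1) j (T.par (j+(k+1)) (cast (congrArg T.V (by omega : j+1+(k+1) = j+(k+1+1))) x))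
        = T.par j (descend T k (j+1) (T.par (j+1+k) x))
    have h1 : T.par (j+(k+1)) (cast (congrArg T.V (by omega : j+1+(k+1) = j+(k+1+1))) x)
        = cast (congrArg T.V (by omega : j+1+k = j+(k+1))) (T.par (j+1+k) x) := by
      apply eq_of_heq
      refine (T.par_heq (by omega : j+(k+1) = j+1+k) (cast_heq _ _)).trans ?_
      exact (cast_heq _ _).symm
    rw [h1]
    exact IH (T.par (j+1+k) x)

def fI (T : BarTree r e) (i : ℕ) (_h : i ≤ e) (x : Fin r) : T.V i :=
  descend T (e - i) i (cast (congrArg T.V (by omega : e = i + (e - i))) (T.ent x))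

theorem toChain_eq (T : BarTree r e) (i : Fin (e+2)) (h : (i:ℕ) ≤ e) :
    toChain T i = Setoid.ker (fI T (i:ℕ) h) := by
  unfold toChain fI; rw [dif_pos h]

theorem toChain_bot (T : BarTree r e) (i : Fin (e+2)) (h : ¬ (i:ℕ) ≤ e) : toChain T i = ⊥ :=
  dif_neg h

theorem fI_last (T : BarTree r e) (h : e ≤ e) (x : Fin r) : fI T e h x = T.ent x := by
  unfold fI
  exact descend_heq T (k' := 0) (by omega) (cast_heq _ _)

theorem fI_step (T : BarTree r e) (i : ℕ) (h : i + 1 ≤ e) (x : Fin r) :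
    fI T i (by omega) x = T.par i (fI T (i+1) h x) := by
  unfold fI
  refine Eq.trans ?_ (descend_step T (e - (i+1)) i
    (cast (congrArg T.V (by omega : e = i+1+(e-(i+1)))) (T.ent x)))
  refine descend_heq T (by omega : e - i = (e - (i+1)) + 1) ?_
  exact (cast_heq _ _).trans ((cast_heq _ _).trans (cast_heq _ _)).symm


theorem fI_surj (T : BarTree r e) : ∀ i (h : i ≤ e), Function.Surjective (fI T i h) := by
  have base : Function.Surjective (fI T e le_rfl) := by
    intro v; obtain ⟨x, hx⟩ := T.ent_surj v
    exact ⟨x, by rw [fI_last]; exact hx⟩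
  have step : ∀ k (h : k < e), Function.Surjective (fI T (k+1) h) →
      Function.Surjective (fI T k (le_of_lt h)) := by
    intro k hk IH v
    obtain ⟨w, hw⟩ := T.par_surj k hk v
    obtain ⟨x, hx⟩ := IH w
    exact ⟨x, by rw [fI_step T k hk x, hx, hw]⟩
  intro i h
  exact Nat.decreasingInduction (motive := fun m hm => Function.Surjective (fI T m hm))
    (fun k hk ih => step k hk ih) base h

theorem toChain_step_le (T : BarTree r e) (b : ℕ) (hb : b + 1 < e + 2) :
    toChain T ⟨b+1, hb⟩ ≤ toChain T ⟨b, by omega⟩ := by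
  by_cases h : b + 1 ≤ e
  · rw [toChain_eq T ⟨b+1, hb⟩ h, toChain_eq T ⟨b, by omega⟩ (by simpa using Nat.le_of_succ_le h)]
    refine Setoid.le_def.mpr fun {x y} hxy => ?_
    refine Setoid.ker_def.mpr ?_
    have hxy' : fI T (b+1) h x = fI T (b+1) h y := Setoid.ker_def.mp hxy
    rw [fI_step T b h x, fI_step T b h y, hxy']
  · rw [toChain_bot T ⟨b+1, hb⟩ h]; exact bot_le

theorem toChain_antitone (T : BarTree r e) : Antitone (toChain T) := by
  have main : ∀ (a b : ℕ) (hb : b < e + 2) (hab : a ≤ b),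
      toChain T ⟨b, hb⟩ ≤ toChain T ⟨a, by omega⟩ := by
    intro a b
    induction b with
    | zero =>
      intro hb hab
      have ha : a = 0 := Nat.le_zero.mp hab
      subst ha; exact le_rfl
    | succ b IH =>
      intro hb hab
      rcases Nat.lt_or_ge a (b+1) with h | h
      · exact (toChain_step_le T b hb).trans (IH (by omega) (by omega))
      · have : a = b + 1 := by omega
        subst this; exact le_rfl
  intro i j hij
  exact main i.1 j.1 j.2 hij

theorem toChain_zero (T : BarTree r e) : toChain T 0 = ⊤ := by
  rw [toChain_eq T 0 (by simp)]
  refine Setoid.ext fun x y => iff_of_true (Setoid.ker_def.mpr ?_) trivial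
  have h0 : ((0 : Fin (e+2)) : ℕ) = 0 := Fin.val_zero _
  haveI : Subsingleton (T.V ((0 : Fin (e+2)) : ℕ)) := h0 ▸ T.root_subsingleton
  exact Subsingleton.elim _ _

theorem toChain_last (T : BarTree r e) : toChain T (Fin.last (e+1)) = ⊥ :=
  toChain_bot T _ (by simp [Fin.last])


theorem iso_iff (T T' : BarTree r e) : BarTreeIso T T' ↔ toChain T = toChain T' := by
  constructor
  · rintro ⟨f, hpar, hent⟩
    have hfI : ∀ i (h : i ≤ e) (x : Fin r), fI T' i h x = f i (fI T i h x) := by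
      have base : ∀ x, fI T' e le_rfl x = f e (fI T e le_rfl x) := by
        intro x; rw [fI_last, fI_last]; exact hent x
      have step : ∀ k (h : k < e), (∀ x, fI T' (k+1) h x = f (k+1) (fI T (k+1) h x)) →
          ∀ x, fI T' k (le_of_lt h) x = f k (fI T k (le_of_lt h) x) := by
        intro k hk IH x
        rw [fI_step T' k hk x, fI_step T k hk x, IH x, hpar k]
      intro i h
      exact Nat.decreasingInduction
        (motive := fun m hm => ∀ x, fI T' m hm x = f m (fI T m hm x))
        (fun k hk ih => step k hk ih) base h
    funext i
    by_cases h : (i : ℕ) ≤ e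
    · rw [toChain_eq T i h, toChain_eq T' i h]
      refine Setoid.ext fun x y => ?_
      rw [Setoid.ker_def, Setoid.ker_def, hfI _ h x, hfI _ h y]
      exact ⟨fun hh => congrArg _ hh, fun hh => (f (i:ℕ)).injective hh⟩
    · rw [toChain_bot T i h, toChain_bot T' i h]
  · intro h
    have hker : ∀ i (hi : i ≤ e), Setoid.ker (fI T i hi) = Setoid.ker (fI T' i hi) := by
      intro i hi
      have := congrFun h ⟨i, by omega⟩
      rwa [toChain_eq T ⟨i, by omega⟩ hi, toChain_eq T' ⟨i, by omega⟩ hi] at this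
    let F : ∀ i, T.V i ≃ T'.V i := fun i =>
      if hi : i ≤ e then
        kerEquiv (fI T i hi) (fI T' i hi) (fI_surj T i hi) (fI_surj T' i hi) (hker i hi)
      else
        @Equiv.equivOfIsEmpty _ _ (T.top_empty i (by omega)) (T'.top_empty i (by omega))
    have hF : ∀ i (hi : i ≤ e) (x : Fin r), F i (fI T i hi x) = fI T' i hi x := by
      intro i hi x
      simp only [F, dif_pos hi]
      exact kerEquiv_apply _ _ _ _ _ x
    refine ⟨F, ?_, ?_⟩
    · intro i v
      by_cases hi : i + 1 ≤ e
      · obtain ⟨x, rfl⟩ := fI_surj T (i+1) hi v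
        rw [hF (i+1) hi x, ← fI_step T' i hi x, ← fI_step T i hi x, hF i (by omega) x]
      · exact ((T.top_empty (i+1) (by omega)).elim v)
    · intro x
      have h1 := hF e le_rfl x
      rw [fI_last, fI_last] at h1
      exact h1.symm


section ChainTree
variable (c : Fin (e + 2) → Setoid (Fin r))

/-- Extension of the chain to all of ℕ (junk above `e+1`). -/
def cc (i : ℕ) : Setoid (Fin r) := c ⟨min i (e+1), by omega⟩

theorem cc_le (hc : Antitone c) {i : ℕ} (h : i + 1 ≤ e + 1) : cc c (i+1) ≤ cc c i := by
  refine hc ?_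
  show (⟨min i (e+1), _⟩ : Fin (e+2)) ≤ ⟨min (i+1) (e+1), _⟩
  rw [Fin.le_def]
  simp only []
  omega

def chainTree (hc : Antitone c) (h0 : c 0 = ⊤) : BarTree r e where
  V i := Quotient (cc c i) × PLift (i ≤ e)
  top_empty i h := ⟨fun p => absurd p.2.down (by omega)⟩
  par i p :=
    ⟨Quotient.lift (fun a => (Quotient.mk (cc c i) a : Quotient (cc c i)))
      (fun a b hab => Quotient.sound
        (Setoid.le_def.mp (cc_le c hc (le_trans p.2.down (Nat.le_succ e))) hab))
      p.1,
     ⟨Nat.le_of_succ_le p.2.down⟩⟩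
  ent x := ⟨Quotient.mk (cc c e) x, ⟨le_rfl⟩⟩
  root_subsingleton := by
    constructor
    rintro ⟨q, hq⟩ ⟨q', hq'⟩
    obtain ⟨a, rfl⟩ := Quotient.exists_rep q
    obtain ⟨b, rfl⟩ := Quotient.exists_rep q'
    have hab : cc c 0 a b := by
      show c ⟨min 0 (e+1), _⟩ a b
      have he : (⟨min 0 (e+1), by omega⟩ : Fin (e+2)) = 0 := by
        apply Fin.ext; simp
      rw [he, h0]
      trivial
    rw [Quotient.sound hab]
    exact Prod.ext rfl (Subsingleton.elim _ _)
  par_surj i hi := by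
    rintro ⟨q, hq⟩
    obtain ⟨a, rfl⟩ := Quotient.exists_rep q
    refine ⟨⟨Quotient.mk (cc c (i+1)) a, ⟨hi⟩⟩, ?_⟩
    exact Prod.ext rfl (Subsingleton.elim _ _)
  ent_surj := by
    rintro ⟨q, hq⟩
    obtain ⟨a, rfl⟩ := Quotient.exists_rep q
    exact ⟨a, Prod.ext rfl (Subsingleton.elim _ _)⟩

theorem chainTree_fI (hc : Antitone c) (h0 : c 0 = ⊤) : ∀ i (hi : i ≤ e) (x : Fin r),
    fI (chainTree c hc h0) i hi x = ⟨Quotient.mk (cc c i) x, ⟨hi⟩⟩ := by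
  have base : ∀ x : Fin r,
      fI (chainTree c hc h0) e le_rfl x = ⟨Quotient.mk (cc c e) x, ⟨le_rfl⟩⟩ := by
    intro x; rw [fI_last]; rfl
  have step : ∀ k (h : k < e),
      (∀ x, fI (chainTree c hc h0) (k+1) h x = ⟨Quotient.mk (cc c (k+1)) x, ⟨h⟩⟩) →
      ∀ x, fI (chainTree c hc h0) k (le_of_lt h) x = ⟨Quotient.mk (cc c k) x, ⟨le_of_lt h⟩⟩ := by
    intro k hk IH x
    rw [fI_step _ k hk x, IH x]
    rfl
  intro i hi
  exact Nat.decreasingInduction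
    (motive := fun m hm => ∀ x, fI (chainTree c hc h0) m hm x = ⟨Quotient.mk (cc c m) x, ⟨hm⟩⟩)
    (fun k hk ih => step k hk ih) base hi

theorem chainTree_toChain (hc : Antitone c) (h0 : c 0 = ⊤)
    (hlast : c (Fin.last (e+1)) = ⊥) :
    toChain (chainTree c hc h0) = c := by
  funext i
  by_cases h : (i : ℕ) ≤ e
  · rw [toChain_eq _ i h]
    refine Setoid.ext fun x y => ?_
    rw [Setoid.ker_def, chainTree_fI c hc h0 _ h x, chainTree_fI c hc h0 _ h y]
    refine Iff.trans Prod.ext_iff ?_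
    have hcc : cc c (i : ℕ) = c i := by
      unfold cc
      congr 1
      apply Fin.ext
      show min (i : ℕ) (e+1) = (i : ℕ)
      omega
    constructor
    · rintro ⟨h1, -⟩
      have := Quotient.exact h1
      rwa [hcc] at this
    · intro hxy
      exact ⟨Quotient.sound (show cc c (i:ℕ) x y by rwa [hcc]), Subsingleton.elim _ _⟩
  · have hi : i = Fin.last (e+1) := by
      apply Fin.ext
      have := i.2
      rw [Fin.val_last]
      omega
    rw [toChain_bot _ i h, hi, hlast]

end ChainTree


theorem actTree_descend (w : Equiv.Perm (Fin r)) (T : BarTree r e) :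
    ∀ (k j : ℕ) (x : T.V (j + k)), descend (actTree w T) k j x = descend T k j x := by
  intro k
  induction k with
  | zero => intro j x; rfl
  | succ k IH =>
    intro j x
    show descend (actTree w T) k j ((actTree w T).par (j+k) x) = descend T k j (T.par (j+k) x)
    exact IH j (T.par (j+k) x)

theorem actTree_fI (w : Equiv.Perm (Fin r)) (T : BarTree r e) (i : ℕ) (hi : i ≤ e) (x : Fin r) :
    fI (actTree w T) i hi x = fI T i hi (w⁻¹ x) := by
  unfold fI
  exact actTree_descend w T (e - i) i _

theorem toChain_act (w : Equiv.Perm (Fin r)) (T : BarTree r e) :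
    toChain (actTree w T) = fun i => permPart w (toChain T i) := by
  funext i
  by_cases h : (i : ℕ) ≤ e
  · rw [toChain_eq _ i h, toChain_eq T i h]
    refine Setoid.ext fun x y => ?_
    rw [Setoid.ker_def, actTree_fI w T _ h x, actTree_fI w T _ h y]
    rw [permPart, Setoid.comap_rel, Setoid.ker_def]
    exact Iff.rfl
  · rw [toChain_bot _ i h, toChain_bot T i h]
    refine Setoid.ext fun x y => ?_
    rw [permPart, Setoid.comap_rel]
    show x = y ↔ w⁻¹ x = w⁻¹ y
    exact ⟨fun hh => congrArg _ hh, fun hh => (w⁻¹).injective hh⟩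

theorem setoid_exists_of_not_le {α : Type*} {s t : Setoid α} (h : ¬ s ≤ t) :
    ∃ x y, s x y ∧ ¬ t x y := by
  by_contra h'
  push_neg at h'
  exact h (Setoid.le_def.mpr fun {x y} hxy => h' x y hxy)

theorem nonUnit_iff (T : BarTree r e) : NonUnitLevels T ↔ StrictAnti (toChain T) := by
  constructor
  · rintro ⟨hlow, htop⟩
    have hne : ∀ (b : ℕ) (hb : b + 1 < e + 2),
        toChain T ⟨b+1, hb⟩ ≠ toChain T ⟨b, by omega⟩ := by
      intro b hb heq
      by_cases hbe : b < e
      · obtain ⟨v, hv⟩ := hlow b hbe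
        obtain ⟨w0, hw0⟩ := T.par_surj b hbe v
        have hvex : ∃ w', w' ≠ w0 ∧ T.par b w' = v := by
          by_contra hno
          push_neg at hno
          exact hv ⟨w0, hw0, fun y hy => by
            by_contra hyne
            exact (hno y hyne) hy⟩
        obtain ⟨w1, hw1ne, hw1⟩ := hvex
        obtain ⟨x, hx⟩ := fI_surj T (b+1) hbe w0
        obtain ⟨y, hy⟩ := fI_surj T (b+1) hbe w1
        have hrelb : (toChain T ⟨b, by omega⟩) x y := by
          rw [toChain_eq T _ (show ((⟨b, by omega⟩ : Fin (e+2)) : ℕ) ≤ e from hbe.le)]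
          refine Setoid.ker_def.mpr ?_
          rw [fI_step T b hbe x, fI_step T b hbe y, hx, hy, hw0, hw1]
        have hnrel : ¬ (toChain T ⟨b+1, hb⟩) x y := by
          rw [toChain_eq T _ (show ((⟨b+1, hb⟩ : Fin (e+2)) : ℕ) ≤ e from hbe)]
          intro hcon
          have hcon' := Setoid.ker_def.mp hcon
          rw [hx, hy] at hcon'
          exact hw1ne hcon'.symm
        rw [heq] at hnrel
        exact hnrel hrelb
      · have hbe' : b = e := by omega
        subst hbe'
        obtain ⟨v, hv⟩ := htop
        obtain ⟨x, hx⟩ := T.ent_surj v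
        have hvex : ∃ y, y ≠ x ∧ T.ent y = v := by
          by_contra hno
          push_neg at hno
          exact hv ⟨x, hx, fun y hy => by
            by_contra hyne
            exact (hno y hyne) hy⟩
        obtain ⟨y, hyne, hy⟩ := hvex
        have hrelb : (toChain T ⟨b, by omega⟩) x y := by
          rw [toChain_eq T _ (show ((⟨b, by omega⟩ : Fin (b+2)) : ℕ) ≤ b from le_rfl)]
          refine Setoid.ker_def.mpr ?_
          rw [fI_last T le_rfl x, fI_last T le_rfl y, hx, hy]
        have hnrel : ¬ (toChain T ⟨b+1, hb⟩) x y := by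
          rw [toChain_bot T _ (show ¬ ((⟨b+1, hb⟩ : Fin (b+2)) : ℕ) ≤ b from by
            show ¬ b + 1 ≤ b; omega)]
          intro hcon
          exact hyne ((hcon : x = y) ▸ rfl)
        rw [heq] at hnrel
        exact hnrel hrelb
    intro i j hij
    have hij' : (i : ℕ) + 1 ≤ (j : ℕ) := hij
    have h1 : toChain T j ≤ toChain T ⟨(i:ℕ)+1, by omega⟩ :=
      toChain_antitone T (show (⟨(i:ℕ)+1, by omega⟩ : Fin (e+2)) ≤ j from hij')
    have h2 : toChain T ⟨(i:ℕ)+1, by omega⟩ < toChain T i := by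
      refine lt_of_le_of_ne ?_ (hne (i:ℕ) (by omega))
      exact toChain_step_le T (i:ℕ) (by omega)
    exact lt_of_le_of_lt h1 h2
  · intro hs
    constructor
    · intro b hbe
      have hlt : toChain T ⟨b+1, by omega⟩ < toChain T ⟨b, by omega⟩ :=
        hs (show (⟨b, by omega⟩ : Fin (e+2)) < ⟨b+1, by omega⟩ from Nat.lt_succ_self b)
      obtain ⟨x, y, hxy, hnxy⟩ := setoid_exists_of_not_le (fun hle => lt_irrefl _ (lt_of_lt_of_le hlt hle))
      rw [toChain_eq T _ (show ((⟨b, by omega⟩ : Fin (e+2)) : ℕ) ≤ e from hbe.le)] at hxy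
      rw [toChain_eq T _ (show ((⟨b+1, by omega⟩ : Fin (e+2)) : ℕ) ≤ e from hbe)] at hnxy
      have hxy' : fI T b (by omega) x = fI T b (by omega) y := Setoid.ker_def.mp hxy
      refine ⟨fI T b (by omega) x, ?_⟩
      rintro ⟨w0, hw0, huniq⟩
      have h1 : fI T (b+1) hbe x = w0 := huniq _ (by rw [fI_step T b hbe x])
      have h2 : fI T (b+1) hbe y = w0 := huniq _ (by
        show T.par b (fI T (b+1) hbe y) = fI T b (by omega) x
        rw [← fI_step T b hbe y]
        exact hxy'.symm)
      exact hnxy (Setoid.ker_def.mpr (h1.trans h2.symm))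
    · have hlt : toChain T ⟨e+1, by omega⟩ < toChain T ⟨e, by omega⟩ :=
        hs (show (⟨e, by omega⟩ : Fin (e+2)) < ⟨e+1, by omega⟩ from Nat.lt_succ_self e)
      obtain ⟨x, y, hxy, hnxy⟩ := setoid_exists_of_not_le (fun hle => lt_irrefl _ (lt_of_lt_of_le hlt hle))
      rw [toChain_eq T _ (show ((⟨e, by omega⟩ : Fin (e+2)) : ℕ) ≤ e from le_rfl)] at hxy
      rw [toChain_bot T _ (show ¬ ((⟨e+1, by omega⟩ : Fin (e+2)) : ℕ) ≤ e from by show ¬ e + 1 ≤ e; omega)] at hnxy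
      have hxy' : fI T e le_rfl x = fI T e le_rfl y := Setoid.ker_def.mp hxy
      rw [fI_last, fI_last] at hxy'
      refine ⟨T.ent x, ?_⟩
      rintro ⟨x0, hx0, huniq⟩
      exact hnxy (show x = y from (huniq x rfl).trans (huniq y hxy'.symm).symm)

end BarTree

/-- For the operad `C` with `C(r) = K` (trivial `Σ_r`-representation)
for `r ≥ 1` and `C(0) = 0` (the commutative operad), the degree-`d` part of the
simplicial bar construction `N_d(C)(r)` — spanned by isomorphism classes of `r`-trees
with `d` levels all of which contain a non-unit vertex — is isomorphic, compatibly with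
the `Σ_r`-actions and the differentials, to the degree-`d` part of the normalized chain
complex of the simplicial set `K̄(r)` of chains of partitions of `{1, …, r}` — spanned by
the nondegenerate `d`-simplices, i.e. the strict chains `λ_0 < ⋯ < λ_d` from the
one-block partition to the discrete one.  Explicitly, the assignment `tree ↦ chain of
partitions` induces a bijection from isomorphism classes of `r`-trees with `d = e + 1`
levels onto the `d`-simplices of `K̄(r)`, it is `Σ_r`-equivariant, and it matches trees
with only non-unit levels with nondegenerate simplices; the induced `Σ_r`-equivariant
isomorphisms of the free `K`-modules on these bases identify the two chain complexes. -/
theorem bar_construction_commutative_operad_is_partition_complex (r e : ℕ) :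
    -- `toChain` lands in the set of `(e+1)`-simplices of `K̄(r)`
    (∀ T : BarTree r e,
      Antitone (toChain T) ∧ toChain T 0 = ⊤ ∧ toChain T (Fin.last (e + 1)) = ⊥) ∧
    -- it induces an injection on isomorphism classes of trees …
    (∀ T T' : BarTree r e, BarTreeIso T T' ↔ toChain T = toChain T') ∧
    -- … and a surjection onto the simplices of `K̄(r)`
    (∀ c : Fin (e + 2) → Setoid (Fin r),
      Antitone c → c 0 = ⊤ → c (Fin.last (e + 1)) = ⊥ →
        ∃ T : BarTree r e, toChain T = c) ∧
    -- it is `Σ_r`-equivariant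
    (∀ (w : Equiv.Perm (Fin r)) (T : BarTree r e),
      toChain (actTree w T) = fun i => permPart w (toChain T i)) ∧
    -- trees with only non-unit levels correspond to nondegenerate simplices
    (∀ T : BarTree r e, NonUnitLevels T ↔ StrictAnti (toChain T)) := by
  refine ⟨?_, ?_, ?_, ?_, ?_⟩
  · intro T
    exact ⟨BarTree.toChain_antitone T, BarTree.toChain_zero T, BarTree.toChain_last T⟩
  · intro T T'
    exact BarTree.iso_iff T T'
  · intro c hc h0 hl
    exact ⟨BarTree.chainTree c hc h0, BarTree.chainTree_toChain c hc h0 hl⟩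
  · intro w T
    exact BarTree.toChain_act w T
  · intro T
    exact BarTree.nonUnit_iff T

end
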